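/- Let (t_n) be a strictly increasing sequence of positive reals with t_1 > 1 such that ∑_{n=1}^∞ t_n^{-s} converges for all s > 1. Then for every n ≥ 0, lim_{s→∞} (∑_{k=n+1}^∞ t_k^{-s})^{-1/s} = t_{n+1}. -/

import Mathlib

open Filter Topology

/-- Recurrence extraction: the `-1/s` power of the tail of the generalized
zeta series recovers the `(n+1)`-st element. -/
theorem zeta_series_extract_tail (t : ℕ → ℝ) (hpos : ∀ n, 0 < t n)
    (hmono : StrictMono t) (h1 : 1 < t 0)
    (hsum : ∀ s : ℝ, 1 < s → Summable fun n => (t n) ^ (-s)) :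
    ∀ n : ℕ,
      Tendsto (fun s : ℝ => (∑' k, (t (k + n)) ^ (-s)) ^ (-1 / s)) atTop (𝓝 (t n)) := by
  intro n
  set a := t n with ha
  set b := t (n + 1) with hb
  have ha0 : 0 < a := hpos n
  have hb0 : 0 < b := hpos (n + 1)
  have hab : a < b := hmono (Nat.lt_succ_self n)
  have hsumtail : ∀ s : ℝ, 1 < s → Summable (fun k => t (k + n) ^ (-s)) :=
    fun s hs => (hsum s hs).comp_injective (add_left_injective n)
  have hsumtail' : ∀ s : ℝ, 1 < s → Summable (fun k => t (k + 1 + n) ^ (-s)) :=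
    fun s hs => (hsum s hs).comp_injective
      (fun x y h => by simpa using h : Function.Injective (fun k => k + 1 + n))
  set C := ∑' k, t (k + 1 + n) ^ (-(2 : ℝ)) with hC
  have hC0 : 0 ≤ C := tsum_nonneg fun k => Real.rpow_nonneg (hpos _).le _
  set F := fun s : ℝ => ∑' k, t (k + n) ^ (-s) with hF
  set G := fun s : ℝ => a ^ s * F s with hG
  -- lower bound on F
  have hFlow : ∀ s : ℝ, 1 < s → a ^ (-s) ≤ F s := by
    intro s hs
    have := Summable.le_tsum (hsumtail s hs) 0 (fun k _ => Real.rpow_nonneg (hpos _).le _)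
    simpa using this
  have hGlow : ∀ s : ℝ, 1 < s → 1 ≤ G s := by
    intro s hs
    have h := mul_le_mul_of_nonneg_left (hFlow s hs) (Real.rpow_nonneg ha0.le s)
    calc (1 : ℝ) = a ^ s * a ^ (-s) := by
          rw [← Real.rpow_add ha0]; simp
      _ ≤ G s := h
  -- upper bound on G
  have hGup : ∀ s : ℝ, 2 ≤ s → G s ≤ 1 + C * b ^ (2 : ℝ) * (a / b) ^ s := by
    intro s hs
    have hs1 : 1 < s := by linarith
    have hsplit : F s = a ^ (-s) + ∑' k, t (k + 1 + n) ^ (-s) := by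
      show (∑' k, t (k + n) ^ (-s)) = _
      rw [Summable.tsum_eq_zero_add (hsumtail s hs1)]
      norm_num
      rfl
    have hterm : ∀ k : ℕ, t (k + 1 + n) ^ (-s) ≤ t (k + 1 + n) ^ (-(2:ℝ)) * b ^ (2 - s) := by
      intro k
      have hbk : b ≤ t (k + 1 + n) := hmono.monotone (by omega)
      have h1 : t (k + 1 + n) ^ (-s) = t (k + 1 + n) ^ (-(2:ℝ)) * t (k + 1 + n) ^ (2 - s) := by
        rw [← Real.rpow_add (hpos _)]; ring_nf
      rw [h1]
      exact mul_le_mul_of_nonneg_left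
        (Real.rpow_le_rpow_of_nonpos hb0 hbk (by linarith))
        (Real.rpow_nonneg (hpos _).le _)
    have hT : (∑' k, t (k + 1 + n) ^ (-s)) ≤ C * b ^ (2 - s) := by
      calc (∑' k, t (k + 1 + n) ^ (-s))
          ≤ ∑' k, t (k + 1 + n) ^ (-(2:ℝ)) * b ^ (2 - s) := by
            apply Summable.tsum_le_tsum hterm (hsumtail' s hs1)
            exact (hsumtail' 2 one_lt_two).mul_right _
        _ = C * b ^ (2 - s) := by rw [tsum_mul_right]
    have hbs : b ^ (2 - s) = b ^ (2:ℝ) / b ^ s := Real.rpow_sub hb0 2 s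
    have habs : (a / b) ^ s = a ^ s / b ^ s := Real.div_rpow ha0.le hb0.le s
    have has : a ^ s * a ^ (-s) = 1 := by rw [← Real.rpow_add ha0]; simp
    have hbspos : 0 < b ^ s := Real.rpow_pos_of_pos hb0 s
    calc G s = a ^ s * F s := rfl
      _ ≤ a ^ s * (a ^ (-s) + C * b ^ (2 - s)) := by
          apply mul_le_mul_of_nonneg_left _ (Real.rpow_nonneg ha0.le s)
          rw [hsplit]; linarith
      _ = 1 + C * b ^ (2:ℝ) * (a / b) ^ s := by
          rw [hbs, habs, mul_add, has]; ring
  -- G tends to 1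
  have hratio : Tendsto (fun s : ℝ => (a / b) ^ s) atTop (𝓝 0) := by
    exact tendsto_rpow_atTop_of_base_lt_one (a / b)
      (by linarith [div_pos ha0 hb0]) ((div_lt_one hb0).mpr hab)
  have hUp : Tendsto (fun s : ℝ => 1 + C * b ^ (2:ℝ) * (a / b) ^ s) atTop (𝓝 1) := by
    have := (hratio.const_mul (C * b ^ (2:ℝ))).const_add 1
    simpa using this
  have hGtend : Tendsto G atTop (𝓝 1) := by
    apply tendsto_of_tendsto_of_tendsto_of_le_of_le' tendsto_const_nhds hUp
    · filter_upwards [eventually_ge_atTop (2:ℝ)] with s hs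
      exact hGlow s (by linarith)
    · filter_upwards [eventually_ge_atTop (2:ℝ)] with s hs
      exact hGup s hs
  -- exponent tends to 0
  have hexp : Tendsto (fun s : ℝ => -1 / s) atTop (𝓝 0) := by
    have h := (tendsto_inv_atTop_zero : Tendsto (fun r : ℝ => r⁻¹) atTop (𝓝 0)).neg
    simp only [neg_zero] at h
    simpa [neg_div, one_div] using h
  have hGrp : Tendsto (fun s : ℝ => G s ^ (-1 / s)) atTop (𝓝 1) := by
    have := hGtend.rpow hexp (Or.inl one_ne_zero)
    simpa using this
  have hmain : Tendsto (fun s : ℝ => a * G s ^ (-1 / s)) atTop (𝓝 a) := by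
    simpa using hGrp.const_mul a
  apply hmain.congr'
  filter_upwards [eventually_ge_atTop (2:ℝ)] with s hs
  have hs0 : s ≠ 0 := by linarith
  have hFs : F s = a ^ (-s) * G s := by
    rw [hG]
    rw [← mul_assoc, ← Real.rpow_add ha0]
    simp
  have hGnn : 0 ≤ G s := le_trans zero_le_one (hGlow s (by linarith))
  show a * G s ^ (-1/s) = F s ^ (-1/s)
  rw [hFs, Real.mul_rpow (Real.rpow_nonneg ha0.le _) hGnn,
    ← Real.rpow_mul ha0.le]
  congr 2
  field_simp
  simp
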